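/- Let M be an m×n Boolean matrix and let S be a finite set of {0,1}-valued vectors in ℝ^m such that every column of M is a linear combination of the vectors in S with coefficients in {−1, 0, 1}. Then M can be written as a sum of at most 2|S| signed primitive matrices; i.e., the signed rectangle rank of M satisfies ur(M) ≤ 2|S|. -/

import Mathlib

/-- A primitive matrix: an all-1 rectangle, i.e. the outer product of two
{0,1}-valued vectors. -/
def IsPrimitive {m n : ℕ} (R : Matrix (Fin m) (Fin n) ℝ) : Prop :=
  ∃ u : Fin m → ℝ, ∃ v : Fin n → ℝ,
    (∀ i, u i = 0 ∨ u i = 1) ∧ (∀ j, v j = 0 ∨ v j = 1) ∧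
    ∀ i j, R i j = u i * v j

/-- If every column of a Boolean matrix `M` is a linear combination with
coefficients in `{-1, 0, 1}` of a finite set `S` of `{0,1}`-valued vectors,
then `M` is a `±1`-sum of at most `2|S|` primitive matrices. -/
theorem ur_le_two_card {m n : ℕ} (M : Matrix (Fin m) (Fin n) ℝ)
    (hM : ∀ i j, M i j = 0 ∨ M i j = 1)
    (S : Finset (Fin m → ℝ))
    (hS01 : ∀ v ∈ S, ∀ i, v i = 0 ∨ v i = 1)
    (hcomb : ∀ j : Fin n, ∃ α : (Fin m → ℝ) → ℝ,
      (∀ v, α v = -1 ∨ α v = 0 ∨ α v = 1) ∧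
      ∀ i, M i j = ∑ v ∈ S, α v * v i) :
    ∃ (t : ℕ) (ε : Fin t → ℝ) (R : Fin t → Matrix (Fin m) (Fin n) ℝ),
      t ≤ 2 * S.card ∧
      (∀ i, ε i = 1 ∨ ε i = -1) ∧
      (∀ i, IsPrimitive (R i)) ∧
      M = ∑ i, ε i • R i := by
  classical
  choose α hα hMeq using hcomb
  set c := S.card with hc
  set e : Fin c ≃ {x // x ∈ S} := S.equivFin.symm with he
  set pos : (Fin m → ℝ) → Fin n → ℝ := fun v j => if α j v = 1 then 1 else 0 with hposd
  set neg : (Fin m → ℝ) → Fin n → ℝ := fun v j => if α j v = -1 then 1 else 0 with hnegd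
  set Rpos : (Fin m → ℝ) → Matrix (Fin m) (Fin n) ℝ := fun v i j => v i * pos v j with hRp
  set Rneg : (Fin m → ℝ) → Matrix (Fin m) (Fin n) ℝ := fun v i j => v i * neg v j with hRn
  refine ⟨c + c,
    Fin.addCases (fun _ => 1) (fun _ => -1),
    Fin.addCases (fun k => Rpos (e k)) (fun k => Rneg (e k)), by omega, ?_, ?_, ?_⟩
  · intro i
    refine Fin.addCases (fun k => ?_) (fun k => ?_) i
    · beta_reduce; rw [Fin.addCases_left]; left; rfl
    · beta_reduce; rw [Fin.addCases_right]; right; rfl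
  · intro i
    refine Fin.addCases (fun k => ?_) (fun k => ?_) i
    · simp only [Fin.addCases_left]
      exact ⟨e k, pos (e k), hS01 _ (e k).2, fun j => by by_cases h : α j (e k) = 1 <;>
        simp [hposd, h], fun i j => rfl⟩
    · simp only [Fin.addCases_right]
      exact ⟨e k, neg (e k), hS01 _ (e k).2, fun j => by by_cases h : α j (e k) = -1 <;>
        simp [hnegd, h], fun i j => rfl⟩
  · ext i j
    have key : ∀ v ∈ S, α j v * v i = Rpos v i j - Rneg v i j := by
      intro v hv
      rcases hα j v with h | h | h <;> simp [hRp, hRn, hposd, hnegd, h] <;> norm_num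
    have h3 : ∀ f : (Fin m → ℝ) → ℝ, ∑ k : Fin c, f (e k) = ∑ v ∈ S, f v := by
      intro f
      rw [← Finset.sum_coe_sort S f, ← Equiv.sum_comp e (fun x => f (x : Fin m → ℝ))]
    show M i j = _
    rw [Matrix.sum_apply, Fin.sum_univ_add]
    simp only [Fin.addCases_left, Fin.addCases_right, Matrix.smul_apply, smul_eq_mul,
      one_mul, neg_one_mul, Finset.sum_neg_distrib]
    rw [h3 (fun v => Rpos v i j), h3 (fun v => Rneg v i j), ← sub_eq_add_neg, ← Finset.sum_sub_distrib,
      hMeq j i]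
    exact Finset.sum_congr rfl key
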